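/- Fix d ≥ 1 and define L₀ : ℝ^d → ℝ̄ by L₀(x) = sup_{y ∈ ℝ^d} ( ⟨x,y⟩ − max_{l ∈ {0,1,…,d}} ( ‖y‖_(l) − l ) ). Then the epigraph of L₀ equals the closed convex hull of the union ⋃_{l=0}^{d} ( B^sp_(l) × [l,+∞) ) in ℝ^d × ℝ, where B^sp_(0) = {0} and, for l ∈ {1,…,d}, B^sp_(l) is the unit ball of the l-support norm. -/

import Mathlib

noncomputable section

variable {d : ℕ}

/-- The projection `x_K` of `x` onto the coordinates in `K`
(the components outside `K` vanish). -/
def restr (K : Finset (Fin d)) (x : EuclideanSpace ℝ (Fin d)) : EuclideanSpace ℝ (Fin d) :=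
  WithLp.toLp 2 (fun i => if i ∈ K then x i else 0)

/-- The 2-k-symmetric gauge norm `‖y‖_(k) = sup {‖y_K‖ : |K| ≤ k}`
(equal to `0` for `k = 0`, by the convention `‖·‖_(0) = 0`). -/
def gaugeNorm (k : ℕ) (y : EuclideanSpace ℝ (Fin d)) : ℝ :=
  ⨆ K : {K : Finset (Fin d) // K.card ≤ k}, ‖restr (K : Finset (Fin d)) y‖

/-- The ℓ₀ pseudonorm: the number of nonzero components. -/
def l0 (x : EuclideanSpace ℝ (Fin d)) : ℕ :=
  (Finset.univ.filter fun i => x i ≠ 0).card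

open Classical in
/-- The Capra coupling `¢(x,y) = ⟨x,y⟩ / ‖x‖` for `x ≠ 0`, and `¢(0,y) = 0`. -/
def capra (x y : EuclideanSpace ℝ (Fin d)) : ℝ :=
  if x = 0 then 0 else (inner ℝ x y : ℝ) / ‖x‖

/-- The Capra conjugate of ℓ₀: `y ↦ max_{0 ≤ l ≤ d} (‖y‖_(l) − l)`. -/
def capraConjL0 (y : EuclideanSpace ℝ (Fin d)) : ℝ :=
  ⨆ l : Fin (d + 1), (gaugeNorm (l : ℕ) y - ((l : ℕ) : ℝ))

/-- `L₀(x) = sup_y (⟨x,y⟩ − max_{0 ≤ l ≤ d}(‖y‖_(l) − l))`, with values in `ℝ̄ = EReal`. -/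
def L0 (x : EuclideanSpace ℝ (Fin d)) : EReal :=
  ⨆ y : EuclideanSpace ℝ (Fin d), (((inner ℝ x y : ℝ) - capraConjL0 y : ℝ) : EReal)

/-- The k-support norm: the dual norm of the 2-k-symmetric gauge norm,
`‖y‖^sp_(k) = sup {⟨x,y⟩ : ‖x‖_(k) ≤ 1}`. -/
def suppNorm (k : ℕ) (y : EuclideanSpace ℝ (Fin d)) : ℝ :=
  sSup {c : ℝ | ∃ x : EuclideanSpace ℝ (Fin d), gaugeNorm k x ≤ 1 ∧ c = (inner ℝ x y : ℝ)}

/-- The unit ball of the k-support norm, with the convention `B^sp_(0) = {0}`. -/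
def Bsp (d k : ℕ) : Set (EuclideanSpace ℝ (Fin d)) :=
  if k = 0 then {0} else {y | suppNorm k y ≤ 1}

/-- The degenerate unit sphere `S_K = {x : x_{−K} = 0 and ‖x_K‖ = 1}`. -/
def sphK (K : Finset (Fin d)) : Set (EuclideanSpace ℝ (Fin d)) :=
  {x | (∀ i, i ∉ K → x i = 0) ∧ ‖restr K x‖ = 1}

/-- The degenerate unit ball `B_K = {x : x_{−K} = 0 and ‖x_K‖ ≤ 1}`. -/
def ballK (K : Finset (Fin d)) : Set (EuclideanSpace ℝ (Fin d)) :=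
  {x | (∀ i, i ∉ K → x i = 0) ∧ ‖restr K x‖ ≤ 1}

lemma norm_restr_singleton (i : Fin d) (y : EuclideanSpace ℝ (Fin d)) : ‖restr {i} y‖ = |y i| := by
  rw [EuclideanSpace.norm_eq]
  have h : ∀ j, ‖restr {i} y j‖ ^ 2 = if j = i then y i ^ 2 else 0 := by
    intro j
    by_cases h : j = i
    · subst h; simp [restr, sq_abs]
    · simp [restr, h]
  rw [Finset.sum_congr rfl fun j _ => h j, Finset.sum_ite_eq' Finset.univ i fun _ => y i ^2]
  simp [Real.sqrt_sq_eq_abs]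

instance {k : ℕ} : Nonempty {K : Finset (Fin d) // K.card ≤ k} := ⟨⟨∅, by simp⟩⟩

lemma restr_empty (y : EuclideanSpace ℝ (Fin d)) : restr ∅ y = 0 := by
  ext i; simp [restr]

lemma restr_smul (K : Finset (Fin d)) (c : ℝ) (y : EuclideanSpace ℝ (Fin d)) :
    restr K (c • y) = c • restr K y := by
  ext i
  simp [restr, mul_ite]

lemma norm_restr_le_gauge {k : ℕ} {K : Finset (Fin d)} (hK : K.card ≤ k)
    (y : EuclideanSpace ℝ (Fin d)) : ‖restr K y‖ ≤ gaugeNorm k y :=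
  le_ciSup (f := fun K : {K : Finset (Fin d) // K.card ≤ k} => ‖restr (K : Finset (Fin d)) y‖)
    (Set.Finite.bddAbove (Set.finite_range _)) ⟨K, hK⟩

lemma gaugeNorm_nonneg (k : ℕ) (y : EuclideanSpace ℝ (Fin d)) : 0 ≤ gaugeNorm k y :=
  (norm_nonneg _).trans (norm_restr_le_gauge (by simp) y (K := ∅))

lemma gaugeNorm_exists (k : ℕ) (y : EuclideanSpace ℝ (Fin d)) :
    ∃ K : Finset (Fin d), K.card ≤ k ∧ gaugeNorm k y = ‖restr K y‖ := by
  obtain ⟨⟨K, hK⟩, h⟩ := exists_eq_ciSup_of_finite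
    (f := fun K : {K : Finset (Fin d) // K.card ≤ k} => ‖restr (K : Finset (Fin d)) y‖)
  exact ⟨K, hK, h.symm⟩

lemma gaugeNorm_le {k : ℕ} {c : ℝ} (hc : 0 ≤ c) (y : EuclideanSpace ℝ (Fin d))
    (h : ∀ K : Finset (Fin d), K.card ≤ k → ‖restr K y‖ ≤ c) : gaugeNorm k y ≤ c :=
  ciSup_le fun K => h K K.2

lemma gaugeNorm_zero' (y : EuclideanSpace ℝ (Fin d)) : gaugeNorm 0 y = 0 :=
  le_antisymm (gaugeNorm_le le_rfl y fun K hK => by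
    have : K = ∅ := Finset.card_eq_zero.mp (Nat.le_zero.mp hK)
    rw [this, restr_empty]; simp) (gaugeNorm_nonneg 0 y)

lemma gaugeNorm_smul {k : ℕ} {c : ℝ} (hc : 0 ≤ c) (y : EuclideanSpace ℝ (Fin d)) :
    gaugeNorm k (c • y) = c * gaugeNorm k y := by
  obtain ⟨K₀, hK₀, hg⟩ := gaugeNorm_exists k y
  refine le_antisymm (gaugeNorm_le (mul_nonneg hc (gaugeNorm_nonneg k y)) _ fun K hK => ?_) ?_
  · rw [restr_smul, norm_smul, Real.norm_eq_abs, abs_of_nonneg hc]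
    exact mul_le_mul_of_nonneg_left (norm_restr_le_gauge hK y) hc
  · calc c * gaugeNorm k y = ‖restr K₀ (c • y)‖ := by
          rw [restr_smul, norm_smul, Real.norm_eq_abs, abs_of_nonneg hc, hg]
      _ ≤ _ := norm_restr_le_gauge hK₀ _

lemma abs_coord_le_gauge {k : ℕ} (hk : 1 ≤ k) (i : Fin d) (y : EuclideanSpace ℝ (Fin d)) :
    |y i| ≤ gaugeNorm k y := by
  rw [← norm_restr_singleton]
  exact norm_restr_le_gauge (by simpa using hk) y

lemma norm_le_of_gauge_le_one {k : ℕ} (hk : 1 ≤ k) {z : EuclideanSpace ℝ (Fin d)}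
    (hz : gaugeNorm k z ≤ 1) : ‖z‖ ≤ Real.sqrt d := by
  rw [EuclideanSpace.norm_eq]
  apply Real.sqrt_le_sqrt
  calc ∑ i, ‖z i‖ ^ 2 ≤ ∑ _i : Fin d, (1:ℝ) := by
        apply Finset.sum_le_sum
        intro i _
        have := (abs_coord_le_gauge hk i z).trans hz
        calc ‖z i‖ ^ 2 = |z i| * |z i| := by rw [sq, Real.norm_eq_abs]
          _ ≤ 1 * 1 := mul_le_mul this this (abs_nonneg _) zero_le_one
          _ = 1 := one_mul 1
    _ = d := by simp

lemma inner_restr (K : Finset (Fin d)) (z y : EuclideanSpace ℝ (Fin d)) :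
    (inner ℝ z (restr K y) : ℝ) = (inner ℝ (restr K z) (restr K y) : ℝ) := by
  simp only [PiLp.inner_apply, RCLike.inner_apply, conj_trivial]
  apply Finset.sum_congr rfl
  intro i _
  by_cases h : i ∈ K <;> simp [restr, h]

lemma suppNorm_bddAbove {k : ℕ} (hk : 1 ≤ k) (y : EuclideanSpace ℝ (Fin d)) :
    BddAbove {c : ℝ | ∃ x : EuclideanSpace ℝ (Fin d), gaugeNorm k x ≤ 1 ∧ c = (inner ℝ x y : ℝ)} := by
  refine ⟨Real.sqrt d * ‖y‖, ?_⟩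
  rintro c ⟨x, hx, rfl⟩
  calc (inner ℝ x y : ℝ) ≤ ‖x‖ * ‖y‖ := real_inner_le_norm x y
    _ ≤ Real.sqrt d * ‖y‖ :=
      mul_le_mul_of_nonneg_right (norm_le_of_gauge_le_one hk hx) (norm_nonneg y)

/-- Fact B -/
lemma inner_le_gauge {k : ℕ} (hk : 1 ≤ k) {x : EuclideanSpace ℝ (Fin d)}
    (hx : suppNorm k x ≤ 1) (y : EuclideanSpace ℝ (Fin d)) :
    (inner ℝ x y : ℝ) ≤ gaugeNorm k y := by
  by_cases hg : gaugeNorm k y = 0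
  · have hy : y = 0 := by
      ext i
      have h1 := (abs_coord_le_gauge hk i y).trans hg.le
      have : y i = 0 := abs_nonpos_iff.mp h1
      simpa using this
    subst hy
    rw [hg]
    simp
  · have hgpos : 0 < gaugeNorm k y := (gaugeNorm_nonneg k y).lt_of_ne (Ne.symm hg)
    set z := (gaugeNorm k y)⁻¹ • y with hzdef
    have hz : gaugeNorm k z ≤ 1 := by
      rw [hzdef, gaugeNorm_smul (inv_nonneg.mpr hgpos.le), inv_mul_cancel₀ hg]
    have hmem : (inner ℝ z x : ℝ) ∈
        {c : ℝ | ∃ w : EuclideanSpace ℝ (Fin d), gaugeNorm k w ≤ 1 ∧ c = (inner ℝ w x : ℝ)} :=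
      ⟨z, hz, rfl⟩
    have h2 : (inner ℝ z x : ℝ) ≤ 1 :=
      (le_csSup (suppNorm_bddAbove hk x) hmem).trans hx
    have h3 : (inner ℝ z x : ℝ) = (gaugeNorm k y)⁻¹ * (inner ℝ y x : ℝ) := real_inner_smul_left y x _
    rw [real_inner_comm]
    rw [h3] at h2
    calc (inner ℝ y x : ℝ) = gaugeNorm k y * ((gaugeNorm k y)⁻¹ * (inner ℝ y x : ℝ)) := by
          field_simp
      _ ≤ gaugeNorm k y * 1 := mul_le_mul_of_nonneg_left h2 hgpos.le
      _ = gaugeNorm k y := mul_one _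

/-- Fact A -/
lemma exists_mem_Bsp (l : ℕ) (y : EuclideanSpace ℝ (Fin d)) :
    ∃ x ∈ Bsp d l, (inner ℝ y x : ℝ) = gaugeNorm l y := by
  rcases Nat.eq_zero_or_pos l with hl | hl
  · subst hl
    refine ⟨0, by simp [Bsp], ?_⟩
    rw [gaugeNorm_zero']
    simp
  have hBsp : Bsp d l = {y | suppNorm l y ≤ 1} := if_neg hl.ne'
  obtain ⟨K₀, hK₀, hg⟩ := gaugeNorm_exists l y
  by_cases h0 : ‖restr K₀ y‖ = 0
  · refine ⟨0, ?_, by rw [hg, h0]; simp⟩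
    rw [hBsp]
    show suppNorm l 0 ≤ 1
    apply Real.sSup_le _ zero_le_one
    rintro c ⟨w, _, rfl⟩
    simp
  · have hpos : 0 < ‖restr K₀ y‖ := (norm_nonneg _).lt_of_ne (Ne.symm h0)
    set x := ‖restr K₀ y‖⁻¹ • restr K₀ y with hxdef
    have key : ∀ z : EuclideanSpace ℝ (Fin d), (inner ℝ z x : ℝ) ≤ ‖restr K₀ z‖ := by
      intro z
      have : (inner ℝ z x : ℝ) = ‖restr K₀ y‖⁻¹ * (inner ℝ z (restr K₀ y) : ℝ) :=
        real_inner_smul_right z _ _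
      rw [this, inner_restr]
      calc ‖restr K₀ y‖⁻¹ * (inner ℝ (restr K₀ z) (restr K₀ y) : ℝ)
          ≤ ‖restr K₀ y‖⁻¹ * (‖restr K₀ z‖ * ‖restr K₀ y‖) :=
            mul_le_mul_of_nonneg_left (real_inner_le_norm _ _) (inv_nonneg.mpr hpos.le)
        _ = ‖restr K₀ z‖ := by field_simp
    refine ⟨x, ?_, ?_⟩
    · rw [hBsp]
      show suppNorm l x ≤ 1
      apply Real.sSup_le _ zero_le_one
      rintro c ⟨z, hz, rfl⟩
      exact (key z).trans ((norm_restr_le_gauge hK₀ z).trans hz)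
    · have : (inner ℝ y x : ℝ) = ‖restr K₀ y‖⁻¹ * (inner ℝ y (restr K₀ y) : ℝ) :=
        real_inner_smul_right y _ _
      rw [this, inner_restr, real_inner_self_eq_norm_sq, hg]
      field_simp

lemma capraConj_ge {l : ℕ} (hl : l ≤ d) (y : EuclideanSpace ℝ (Fin d)) :
    gaugeNorm l y - (l : ℝ) ≤ capraConjL0 y := by
  have := le_ciSup (f := fun l : Fin (d+1) => gaugeNorm (l : ℕ) y - ((l : ℕ) : ℝ))
    (Set.Finite.bddAbove (Set.finite_range _)) (⟨l, Nat.lt_succ_of_le hl⟩ : Fin (d+1))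
  simpa [capraConjL0] using this

lemma capraConj_nonneg (y : EuclideanSpace ℝ (Fin d)) : 0 ≤ capraConjL0 y := by
  have := capraConj_ge (Nat.zero_le d) y
  rw [gaugeNorm_zero'] at this
  simpa using this

lemma capraConj_le {c : ℝ} (y : EuclideanSpace ℝ (Fin d))
    (h : ∀ l : ℕ, l ≤ d → gaugeNorm l y - (l : ℝ) ≤ c) : capraConjL0 y ≤ c :=
  ciSup_le fun l => h l (Nat.lt_succ_iff.mp l.isLt)

lemma L0_le_iff (x : EuclideanSpace ℝ (Fin d)) (t : ℝ) :
    L0 x ≤ (t : EReal) ↔ ∀ y, (inner ℝ x y : ℝ) - capraConjL0 y ≤ t := by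
  rw [L0, iSup_le_iff]
  constructor
  · intro h y; exact_mod_cast h y
  · intro h y; exact_mod_cast h y

lemma epi_eq : {p : EuclideanSpace ℝ (Fin d) × ℝ | L0 p.1 ≤ (p.2 : EReal)} =
    ⋂ y : EuclideanSpace ℝ (Fin d),
      {p : EuclideanSpace ℝ (Fin d) × ℝ | (inner ℝ p.1 y : ℝ) - capraConjL0 y ≤ p.2} := by
  ext p
  simp only [Set.mem_setOf_eq, Set.mem_iInter, L0_le_iff]

lemma epi_convex : Convex ℝ {p : EuclideanSpace ℝ (Fin d) × ℝ | L0 p.1 ≤ (p.2 : EReal)} := by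
  rw [epi_eq]
  apply convex_iInter
  intro y
  have : {p : EuclideanSpace ℝ (Fin d) × ℝ | (inner ℝ p.1 y : ℝ) - capraConjL0 y ≤ p.2} =
      {p : EuclideanSpace ℝ (Fin d) × ℝ | (inner ℝ p.1 y : ℝ) - p.2 ≤ capraConjL0 y} := by
    ext p; simp only [Set.mem_setOf_eq]; constructor <;> intro h <;> linarith
  rw [this]
  apply convex_halfSpace_le
  constructor
  · intro a b
    simp only [Prod.fst_add, Prod.snd_add, inner_add_left]
    ring
  · intro c a
    simp only [Prod.smul_fst, Prod.smul_snd, real_inner_smul_left, smul_eq_mul]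
    ring

lemma epi_closed : IsClosed {p : EuclideanSpace ℝ (Fin d) × ℝ | L0 p.1 ≤ (p.2 : EReal)} := by
  rw [epi_eq]
  apply isClosed_iInter
  intro y
  exact isClosed_le ((continuous_fst.inner continuous_const).sub continuous_const)
    continuous_snd


/-- the epigraph of `L₀` equals the closed convex hull of
`⋃_{l=0}^{d} (B^sp_(l) × [l, +∞))` in `ℝ^d × ℝ`, where `B^sp_(0) = {0}` and `B^sp_(l)`
is the unit ball of the l-support norm for `1 ≤ l ≤ d`. -/
theorem L0_epigraph (d : ℕ) (hd : 1 ≤ d) :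
    {p : EuclideanSpace ℝ (Fin d) × ℝ | L0 p.1 ≤ (p.2 : EReal)} =
      closure (convexHull ℝ
        (⋃ l ∈ Set.Iic d, Bsp d l ×ˢ Set.Ici (l : ℝ))) := by
  set S := ⋃ l ∈ Set.Iic d, Bsp d l ×ˢ Set.Ici (l : ℝ) with hSdef
  have hmemS : ∀ (l : ℕ), l ≤ d → ∀ x ∈ Bsp d l, ∀ t : ℝ, (l : ℝ) ≤ t → (x, t) ∈ S := by
    intro l hl x hx t ht
    rw [hSdef]
    exact Set.mem_iUnion₂.mpr ⟨l, hl, Set.mk_mem_prod hx ht⟩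
  apply Set.Subset.antisymm
  · -- hard direction
    intro p hp
    by_contra hmem
    obtain ⟨f, u, hfu, hufp⟩ := geometric_hahn_banach_closed_point
      ((convex_convexHull ℝ S).closure) isClosed_closure hmem
    set φ : EuclideanSpace ℝ (Fin d) →L[ℝ] ℝ :=
      f.comp (ContinuousLinearMap.inl ℝ (EuclideanSpace ℝ (Fin d)) ℝ) with hφ
    set y := (InnerProductSpace.toDual ℝ (EuclideanSpace ℝ (Fin d))).symm φ with hy
    set s := f ((0 : EuclideanSpace ℝ (Fin d)), (1 : ℝ)) with hs
    have hinner : ∀ x : EuclideanSpace ℝ (Fin d), (inner ℝ y x : ℝ) = f (x, (0:ℝ)) := by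
      intro x
      rw [hy]
      rw [InnerProductSpace.toDual_symm_apply]
      simp [hφ]
    have hdecomp : ∀ q : EuclideanSpace ℝ (Fin d) × ℝ,
        f q = (inner ℝ y q.1 : ℝ) + q.2 * s := by
      intro q
      have hq : q = (q.1, (0:ℝ)) + q.2 • ((0 : EuclideanSpace ℝ (Fin d)), (1:ℝ)) := by
        ext <;> simp
      calc f q = f ((q.1, (0:ℝ)) + q.2 • ((0 : EuclideanSpace ℝ (Fin d)), (1:ℝ))) := by
            rw [← hq]
        _ = f (q.1, (0:ℝ)) + q.2 * s := by rw [map_add, map_smul, smul_eq_mul, hs]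
        _ = (inner ℝ y q.1 : ℝ) + q.2 * s := by rw [hinner]
    have hSlt : ∀ q ∈ S, f q < u := fun q hq =>
      hfu q (subset_closure (subset_convexHull ℝ S hq))
    have hkey : ∀ l : ℕ, l ≤ d → gaugeNorm l y + (l : ℝ) * s < u := by
      intro l hl
      obtain ⟨x, hx, hxy⟩ := exists_mem_Bsp l y
      have h1 := hSlt (x, (l : ℝ)) (hmemS l hl x hx _ le_rfl)
      rw [hdecomp] at h1
      simp only at h1
      rw [hxy] at h1
      exact h1
    have hs0 : s ≤ 0 := by
      by_contra h
      push_neg at h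
      have h0 : ∀ t : ℝ, 0 ≤ t → t * s < u := by
        intro t ht
        have hmem0 : ((0 : EuclideanSpace ℝ (Fin d)), t) ∈ S :=
          hmemS 0 (Nat.zero_le d) 0 (by simp [Bsp]) t (by exact_mod_cast ht)
        have := hSlt _ hmem0
        rw [hdecomp] at this
        simpa using this
      have h1 := h0 (max 0 (u / s)) (le_max_left _ _)
      have h2 : u ≤ max 0 (u / s) * s := by
        calc u = (u / s) * s := by field_simp
          _ ≤ max 0 (u / s) * s := mul_le_mul_of_nonneg_right (le_max_right _ _) h.le
      linarith
    have hup : u < (inner ℝ y p.1 : ℝ) + p.2 * s := by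
      rw [← hdecomp]
      exact hufp
    have hpt : ∀ z, (inner ℝ p.1 z : ℝ) - capraConjL0 z ≤ p.2 := (L0_le_iff p.1 p.2).mp hp
    rcases eq_or_lt_of_le hs0 with hseq | hslt
    · -- s = 0
      have hgu : ∀ l : ℕ, l ≤ d → gaugeNorm l y ≤ u := by
        intro l hl
        have h1 := hkey l hl
        rw [hseq] at h1
        simp only [mul_zero, add_zero] at h1
        exact h1.le
      have hA : u < (inner ℝ y p.1 : ℝ) := by
        rw [hseq] at hup
        simpa using hup
      set a := (inner ℝ p.1 y : ℝ) - u with ha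
      have hapos : 0 < a := by rw [ha, real_inner_comm]; linarith
      set lam := (|p.2| + 1) / a with hlam
      have hlampos : 0 < lam := div_pos (by positivity) hapos
      have hconj : capraConjL0 (lam • y) ≤ lam * u := by
        apply capraConj_le
        intro l hl
        rw [gaugeNorm_smul hlampos.le]
        have h1 : gaugeNorm l y ≤ u := hgu l hl
        have h2 : lam * gaugeNorm l y ≤ lam * u := mul_le_mul_of_nonneg_left h1 hlampos.le
        have hlnn : (0:ℝ) ≤ (l : ℝ) := Nat.cast_nonneg l
        linarith
      have h3 := hpt (lam • y)
      rw [real_inner_smul_right] at h3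
      have h4 : lam * a = lam * (inner ℝ p.1 y : ℝ) - lam * u := by rw [ha]; ring
      have h5 : lam * a = |p.2| + 1 := div_mul_cancel₀ _ hapos.ne'
      have h6 := le_abs_self p.2
      linarith
    · -- s < 0
      set b := -s with hb
      have hbpos : 0 < b := by rw [hb]; linarith
      have hsne : s ≠ 0 := by linarith
      set y' := b⁻¹ • y with hy'
      have hconj : capraConjL0 y' ≤ b⁻¹ * u := by
        apply capraConj_le
        intro l hl
        rw [hy', gaugeNorm_smul (inv_nonneg.mpr hbpos.le)]
        have h1 := hkey l hl
        have h2 : b⁻¹ * (gaugeNorm l y + (l : ℝ) * s) ≤ b⁻¹ * u :=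
          mul_le_mul_of_nonneg_left h1.le (inv_nonneg.mpr hbpos.le)
        have h3 : b⁻¹ * ((l : ℝ) * s) = -(l : ℝ) := by
          rw [hb]
          field_simp
        rw [mul_add] at h2
        linarith
      have h3 := hpt y'
      rw [hy', real_inner_smul_right] at h3
      have h5 : p.2 * b < (inner ℝ p.1 y : ℝ) - u := by
        rw [hb, real_inner_comm]
        linarith
      have h6 : b⁻¹ * ((inner ℝ p.1 y : ℝ) - u) ≤ p.2 := by
        have hms : b⁻¹ * ((inner ℝ p.1 y : ℝ) - u) = b⁻¹ * (inner ℝ p.1 y : ℝ) - b⁻¹ * u :=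
          mul_sub _ _ _
        linarith
      have h7 : p.2 < b⁻¹ * ((inner ℝ p.1 y : ℝ) - u) := by
        have h := mul_lt_mul_of_pos_left h5 (inv_pos.mpr hbpos)
        rwa [show b⁻¹ * (p.2 * b) = p.2 from by field_simp] at h
      linarith
  · -- easy direction
    apply closure_minimal _ epi_closed
    apply convexHull_min _ epi_convex
    rintro ⟨x, t⟩ hq
    rw [hSdef] at hq
    simp only [Set.mem_iUnion, Set.mem_prod, Set.mem_Iic, Set.mem_Ici,
      Set.mem_setOf_eq] at hq
    obtain ⟨l, hl, hx, ht⟩ := hq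
    show L0 x ≤ ((t : ℝ) : EReal)
    rw [L0_le_iff]
    intro y
    have h2 := capraConj_ge hl y
    have h1 : (inner ℝ x y : ℝ) ≤ gaugeNorm l y := by
      rcases Nat.eq_zero_or_pos l with h0 | hpos
      · subst h0
        have hx0 : x = 0 := by simpa [Bsp] using hx
        rw [hx0, gaugeNorm_zero']
        simp
      · have hx' : suppNorm l x ≤ 1 := by
          have : Bsp d l = {y | suppNorm l y ≤ 1} := if_neg hpos.ne'
          rw [this] at hx
          exact hx
        exact inner_le_gauge hpos hx' y
    linarith
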